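/- Fix integers n ≥ 2 and k ≥ 3, a constant b_k < 0, δ ∈ (0, 1/2), and a constant B₃ > 0; set c_k := 2(n−1)k²(−b_k)^{2/k} and γ_k := 1/2 − 1/k. Define A₄⁻ and A₄⁺ by (A₄⁻)^{−2} = (1+δ)(1 + (3/8)B₃^{−2})(1−δ)c_k and (A₄⁺)^{−2} = (1−δ)(1 + (1/2)B₃^{−2})(1+δ)c_k (so A₄⁺ < A₄⁻). Let 𝔅 be a Bryant soliton profile and let β : (0,∞) → ℝ be a bounded function with β(r) = (1 + o(1)) r² as r ↘ 0. Then there exist B₄ > 0 sufficiently small and a time τ₅ such that z₋(r,τ) := 𝔅(A₄⁻ r) − e^{−2γ_k τ} β(r) and z₊(r,τ) := 𝔅(A₄⁺ r) + e^{−2γ_k τ} β(r) satisfy z₋(r,τ) < z₊(r,τ) for all 0 < r ≤ B₄ e^{γ_k τ} and all τ ≥ τ₅. -/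

import Mathlib

open Topology Filter Asymptotics Set

/-- `γ_k = 1/2 - 1/k`. -/
noncomputable def gam (k : ℕ) : ℝ := 1/2 - 1/(k:ℝ)

/-- `c_k = 2(n-1)k²(-b_k)^{2/k}`. -/
noncomputable def ck (n k : ℕ) (bk : ℝ) : ℝ :=
  2 * ((n:ℝ) - 1) * (k:ℝ)^2 * (-bk) ^ ((2:ℝ)/(k:ℝ))

/-- The elliptic operator
`E_r[z] = z z'' - (1/2)(z')² + (n-1-z)z'/r + 2(n-1)(1-z)z/r²`. -/
noncomputable def Eop (n : ℕ) (z : ℝ → ℝ) (r : ℝ) : ℝ :=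
  z r * deriv (deriv z) r - (1/2) * (deriv z r)^2
    + ((n:ℝ) - 1 - z r) * deriv z r / r
    + 2 * ((n:ℝ) - 1) * (1 - z r) * z r / r^2

/-- A Bryant soliton profile. -/
structure BryantProfile (n : ℕ) where
  toFun : ℝ → ℝ
  b : ℝ
  b2 : ℝ
  ctilde : ℝ
  smooth : ContDiffOn ℝ (⊤ : ℕ∞) toFun (Set.Ici 0)
  mem_Ioc : ∀ r : ℝ, 0 ≤ r → toFun r ∈ Set.Ioc (0:ℝ) 1
  val_zero : toFun 0 = 1
  deriv_zero : deriv toFun 0 = 0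
  deriv_neg : ∀ r : ℝ, 0 < r → deriv toFun r < 0
  soliton : ∀ r : ℝ, 0 < r → Eop n toFun r = 0
  b_pos : 0 < b
  expand_zero : (fun ρ => toFun ρ - (1 - b * ρ^2)) =O[𝓝[>] (0:ℝ)] fun ρ => ρ^4
  expand_zero_deriv :
    (fun ρ => deriv toFun ρ + 2 * b * ρ) =O[𝓝[>] (0:ℝ)] fun ρ => ρ^3
  expand_top :
    (fun ρ => toFun ρ - (ρ ^ (-2:ℝ) + b2 * ρ ^ (-4:ℝ))) =O[atTop] fun ρ => ρ ^ (-6:ℝ)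
  expand_top_deriv :
    (fun ρ => deriv toFun ρ - (-2 * ρ ^ (-3:ℝ) - 4 * b2 * ρ ^ (-5:ℝ)))
      =O[atTop] fun ρ => ρ ^ (-7:ℝ)
  ctilde_pos : 0 < ctilde
  deriv_lower : ∀ r : ℝ, 0 < r → ctilde * min (r^2) (r ^ (-2:ℝ)) ≤ -(r * deriv toFun r)

/-- `A₄⁻`, defined by `(A₄⁻)⁻² = (1+δ)(1 + (3/8)B₃⁻²)(1-δ)c_k`. -/
noncomputable def A4minus (n k : ℕ) (bk δ B₃ : ℝ) : ℝ :=
  1 / Real.sqrt ((1 + δ) * (1 + (3/8) / B₃^2) * (1 - δ) * ck n k bk)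

/-- `A₄⁺`, defined by `(A₄⁺)⁻² = (1-δ)(1 + (1/2)B₃⁻²)(1+δ)c_k`. -/
noncomputable def A4plus (n k : ℕ) (bk δ B₃ : ℝ) : ℝ :=
  1 / Real.sqrt ((1 - δ) * (1 + (1/2) / B₃^2) * (1 + δ) * ck n k bk)

set_option maxHeartbeats 1000000 in
/-- the tip-region sub- and supersolutions are properly ordered. -/
theorem stmt7 (n k : ℕ) (hn : 2 ≤ n) (hk : 3 ≤ k) (bk : ℝ) (hbk : bk < 0)
    (δ : ℝ) (hδ : δ ∈ Set.Ioo (0:ℝ) (1/2)) (B₃ : ℝ) (hB₃ : 0 < B₃)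
    (𝔅 : BryantProfile n) (β : ℝ → ℝ) (M : ℝ)
    (hβbdd : ∀ r : ℝ, 0 < r → |β r| ≤ M)
    (hβ0 : (fun r => β r - r^2) =o[𝓝[>] (0:ℝ)] fun r => r^2) :
    ∃ B₄ τ₅ : ℝ, 0 < B₄ ∧
      ∀ r τ : ℝ, 0 < r → r ≤ B₄ * Real.exp (gam k * τ) → τ₅ ≤ τ →
        𝔅.toFun (A4minus n k bk δ B₃ * r) - Real.exp (-2 * gam k * τ) * β r
          < 𝔅.toFun (A4plus n k bk δ B₃ * r) + Real.exp (-2 * gam k * τ) * β r := by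
  obtain ⟨hδ0, hδ1⟩ := hδ
  have hn' : (2:ℝ) ≤ (n:ℝ) := by exact_mod_cast hn
  have hk' : (3:ℝ) ≤ (k:ℝ) := by exact_mod_cast hk
  have hck : 0 < ck n k bk := by
    have h1 : (0:ℝ) < (n:ℝ) - 1 := by linarith
    have h2 : (0:ℝ) < (k:ℝ)^2 := pow_pos (by linarith) 2
    have h3 : (0:ℝ) < (-bk) ^ ((2:ℝ)/(k:ℝ)) := Real.rpow_pos_of_pos (by linarith) _
    exact mul_pos (mul_pos (mul_pos two_pos h1) h2) h3
  have hX1 : 0 < (1+δ) * (1 + (3/8)/B₃^2) * (1-δ) * ck n k bk := by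
    have : (0:ℝ) < 1 + (3/8)/B₃^2 := by positivity
    exact mul_pos (mul_pos (mul_pos (by linarith) this) (by linarith)) hck
  have hX2 : 0 < (1-δ) * (1 + (1/2)/B₃^2) * (1+δ) * ck n k bk := by
    have : (0:ℝ) < 1 + (1/2)/B₃^2 := by positivity
    exact mul_pos (mul_pos (mul_pos (by linarith) this) (by linarith)) hck
  have hX12 : (1+δ) * (1 + (3/8)/B₃^2) * (1-δ) * ck n k bk
      < (1-δ) * (1 + (1/2)/B₃^2) * (1+δ) * ck n k bk := by
    have hP : (0:ℝ) < (1+δ) * (1-δ) * ck n k bk :=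
      mul_pos (mul_pos (by linarith) (by linarith)) hck
    have ht : (0:ℝ) < (1/2)/B₃^2 - (3/8)/B₃^2 := by
      have heq : (1/2)/B₃^2 - (3/8)/B₃^2 = (1/8)/B₃^2 := by ring
      rw [heq]; positivity
    calc (1+δ) * (1 + (3/8)/B₃^2) * (1-δ) * ck n k bk
        = ((1+δ) * (1-δ) * ck n k bk) * (1 + (3/8)/B₃^2) := by ring
      _ < ((1+δ) * (1-δ) * ck n k bk) * (1 + (1/2)/B₃^2) :=
          mul_lt_mul_of_pos_left (by linarith) hP
      _ = (1-δ) * (1 + (1/2)/B₃^2) * (1+δ) * ck n k bk := by ring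
  have hA2pos : 0 < A4plus n k bk δ B₃ :=
    one_div_pos.mpr (Real.sqrt_pos.mpr hX2)
  have hAlt : A4plus n k bk δ B₃ < A4minus n k bk δ B₃ := by
    unfold A4minus A4plus
    exact one_div_lt_one_div_of_lt (Real.sqrt_pos.mpr hX1)
      (Real.sqrt_lt_sqrt hX1.le hX12)
  set A₁ := A4minus n k bk δ B₃ with hA₁def
  set A₂ := A4plus n k bk δ B₃ with hA₂def
  have hA1pos : 0 < A₁ := lt_trans hA2pos hAlt
  have hanti : StrictAntiOn 𝔅.toFun (Ici 0) := by
    apply strictAntiOn_of_deriv_neg (convex_Ici 0) 𝔅.smooth.continuousOn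
    intro x hx
    rw [interior_Ici] at hx
    exact 𝔅.deriv_neg x hx
  have hdiff : ∀ x : ℝ, 0 < x → DifferentiableAt ℝ 𝔅.toFun x := fun x hx =>
    (𝔅.smooth.contDiffAt (Ici_mem_nhds hx)).differentiableAt (by simp)
  obtain ⟨r₀, hr₀pos, hr₀⟩ : ∃ r₀ > 0, ∀ r : ℝ, 0 < r → r < r₀ → 0 ≤ β r := by
    have h0 := hβ0.def one_half_pos
    rw [eventually_nhdsWithin_iff, Metric.eventually_nhds_iff] at h0
    obtain ⟨ε, hε, hball⟩ := h0
    refine ⟨ε, hε, fun r h1 h2 => ?_⟩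
    have hb := hball (show dist r 0 < ε by
      simpa [Real.dist_eq, abs_of_pos h1] using h2) h1
    have h3 : |r^2| = r^2 := abs_of_pos (by positivity)
    rw [Real.norm_eq_abs, Real.norm_eq_abs, h3] at hb
    have h6 := (abs_le.mp hb).1
    have h7 : (0:ℝ) ≤ r^2 := sq_nonneg r
    linarith
  have hM : 0 ≤ M := le_trans (abs_nonneg _) (hβbdd 1 one_pos)
  set a := A₂ * r₀ with hadef
  have ha : 0 < a := mul_pos hA2pos hr₀pos
  set K := min 1 (a^4) with hKdef
  have hK : 0 < K := lt_min one_pos (by positivity)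
  set C := 𝔅.ctilde * K * (A₁ - A₂) / A₁^3 with hCdef
  have hC : 0 < C :=
    div_pos (mul_pos (mul_pos 𝔅.ctilde_pos hK) (sub_pos.mpr hAlt)) (by positivity)
  refine ⟨Real.sqrt (C / (2*M+1)), 0, Real.sqrt_pos.mpr (by positivity),
    fun r τ hr hrB _ => ?_⟩
  set B₄ := Real.sqrt (C / (2*M+1)) with hB₄def
  have hB₄ : 0 < B₄ := Real.sqrt_pos.mpr (by positivity)
  have hB₄sq : B₄^2 = C / (2*M+1) := Real.sq_sqrt (by positivity)
  have he : 0 < Real.exp (-2 * gam k * τ) := Real.exp_pos _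
  rcases lt_or_ge r r₀ with hcase | hcase
  · have hβ : 0 ≤ β r := hr₀ r hr hcase
    have hlt : 𝔅.toFun (A₁ * r) < 𝔅.toFun (A₂ * r) :=
      hanti (mem_Ici.mpr (by positivity)) (mem_Ici.mpr (by positivity))
        (mul_lt_mul_of_pos_right hAlt hr)
    linarith [mul_nonneg he.le hβ, hlt]
  · have hA2r : 0 < A₂ * r := mul_pos hA2pos hr
    have hab : A₂ * r < A₁ * r := mul_lt_mul_of_pos_right hAlt hr
    obtain ⟨ξ, hξ, hξd⟩ := exists_deriv_eq_slope 𝔅.toFun hab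
      (𝔅.smooth.continuousOn.mono (fun x hx => mem_Ici.mpr (le_trans hA2r.le hx.1)))
      (fun x hx => (hdiff x (lt_trans hA2r hx.1)).differentiableWithinAt)
    have hξ0 : 0 < ξ := lt_trans hA2r hξ.1
    have hdl := 𝔅.deriv_lower ξ hξ0
    have hrp : ξ ^ (-2:ℝ) = (ξ^2)⁻¹ := by
      rw [show (-2:ℝ) = -((2:ℕ):ℝ) by norm_num, Real.rpow_neg hξ0.le,
        Real.rpow_natCast]
    rw [hrp] at hdl
    have haξ : a ≤ ξ :=
      le_trans (le_trans (mul_le_mul_of_nonneg_left hcase hA2pos.le) hξ.1.le) le_rfl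
    have hKξ : K / ξ^2 ≤ min (ξ^2) (ξ^2)⁻¹ := by
      refine le_min ?_ ?_
      · rw [div_le_iff₀ (by positivity)]
        calc K ≤ a^4 := min_le_right _ _
          _ ≤ ξ^4 := pow_le_pow_left₀ ha.le haξ 4
          _ = ξ^2 * ξ^2 := by ring
      · calc K / ξ^2 ≤ 1 / ξ^2 := by
              gcongr
              exact min_le_left _ _
          _ = (ξ^2)⁻¹ := one_div _
    have hderiv : 𝔅.ctilde * K / ξ^3 ≤ -(deriv 𝔅.toFun ξ) := by
      have h2 : 𝔅.ctilde * K / ξ^2 ≤ ξ * (-(deriv 𝔅.toFun ξ)) := by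
        calc 𝔅.ctilde * K / ξ^2 = 𝔅.ctilde * (K / ξ^2) := by ring
          _ ≤ 𝔅.ctilde * min (ξ^2) (ξ^2)⁻¹ :=
              mul_le_mul_of_nonneg_left hKξ 𝔅.ctilde_pos.le
          _ ≤ -(ξ * deriv 𝔅.toFun ξ) := hdl
          _ = ξ * (-(deriv 𝔅.toFun ξ)) := by ring
      have h3 : (𝔅.ctilde * K / ξ^2) / ξ ≤ -(deriv 𝔅.toFun ξ) :=
        (div_le_iff₀ hξ0).mpr (by linarith [h2])
      calc 𝔅.ctilde * K / ξ^3 = (𝔅.ctilde * K / ξ^2) / ξ := by ring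
        _ ≤ _ := h3
    have hder2 : 𝔅.ctilde * K / (A₁*r)^3 ≤ -(deriv 𝔅.toFun ξ) := by
      refine le_trans ?_ hderiv
      gcongr
      · exact (mul_pos 𝔅.ctilde_pos hK).le
      · exact hξ.2.le
    have hne : A₁ * r - A₂ * r ≠ 0 := (sub_pos.mpr hab).ne'
    have heq : 𝔅.toFun (A₂*r) - 𝔅.toFun (A₁*r)
        = -(deriv 𝔅.toFun ξ) * (A₁*r - A₂*r) := by
      rw [hξd, neg_mul, div_mul_cancel₀ _ hne]; ring
    have hgap : C / r^2 ≤ 𝔅.toFun (A₂*r) - 𝔅.toFun (A₁*r) := by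
      calc C / r^2 = (𝔅.ctilde * K / (A₁*r)^3) * (A₁*r - A₂*r) := by
            rw [hCdef]; field_simp
        _ ≤ -(deriv 𝔅.toFun ξ) * (A₁*r - A₂*r) :=
            mul_le_mul_of_nonneg_right hder2 (by linarith)
        _ = _ := heq.symm
    have hexp2 : (Real.exp (gam k * τ))^2 = Real.exp (2*(gam k * τ)) := by
      rw [sq, ← Real.exp_add]; congr 1; ring
    have h1 : r^2 ≤ B₄^2 * Real.exp (2*(gam k * τ)) := by
      have h1' : r^2 ≤ (B₄ * Real.exp (gam k * τ))^2 :=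
        pow_le_pow_left₀ hr.le hrB 2
      rw [mul_pow, hexp2] at h1'; exact h1'
    have hCB : C / B₄^2 = 2*M+1 := by
      rw [hB₄sq]; field_simp
    have hexpinv : Real.exp (-2 * gam k * τ) = (Real.exp (2*(gam k * τ)))⁻¹ := by
      rw [← Real.exp_neg]; congr 1; ring
    have hrlow : (2*M+1) * Real.exp (-2 * gam k * τ) ≤ C / r^2 := by
      calc (2*M+1) * Real.exp (-2 * gam k * τ)
          = C / B₄^2 * (Real.exp (2*(gam k * τ)))⁻¹ := by rw [hCB, hexpinv]
        _ = C / (B₄^2 * Real.exp (2*(gam k * τ))) := by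
            rw [← div_div]; exact (div_eq_mul_inv _ _).symm
        _ ≤ C / r^2 := by gcongr
    have hgap2 : (2*M+1) * Real.exp (-2 * gam k * τ)
        ≤ 𝔅.toFun (A₂*r) - 𝔅.toFun (A₁*r) := le_trans hrlow hgap
    have hβlow : -M ≤ β r := (abs_le.mp (hβbdd r hr)).1
    have h4 : Real.exp (-2 * gam k * τ) * (-M)
        ≤ Real.exp (-2 * gam k * τ) * β r :=
      mul_le_mul_of_nonneg_left hβlow he.le
    linarith [hgap2, h4, he]
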